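/- Let 𝔤 = V₁ ⊕ V₂ be a stratified real Lie algebra of step 2 and let k ≥ 0 be an integer. Then 𝔤 is hypergenerated of order k if and only if 2k < order(𝔤), where order(𝔤) is the Métivier order of 𝔤. -/

import Mathlib

/-! ### Auxiliary linear algebra lemmas -/

open Module Submodule

section BilinAux

variable {E : Type*} [AddCommGroup E] [Module ℝ E] [FiniteDimensional ℝ E]

lemma aux_finrank_dualAnnihilator_add (Q : Submodule ℝ E) :
    finrank ℝ Q.dualAnnihilator + finrank ℝ Q = finrank ℝ E := by
  rw [← (Subspace.quotEquivAnnihilator Q).finrank_eq, Q.finrank_quotient_add_finrank]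

lemma aux_finrank_sup_span_singleton {P : Submodule ℝ E} {v : E} (hv : v ∉ P) :
    finrank ℝ (P ⊔ span ℝ {v} : Submodule ℝ E) = finrank ℝ P + 1 := by
  have hv0 : v ≠ 0 := fun h => hv (h ▸ P.zero_mem)
  have hle : finrank ℝ (P ⊔ span ℝ {v} : Submodule ℝ E) ≤ finrank ℝ P + 1 := by
    have := Submodule.finrank_sup_add_finrank_inf_eq P (span ℝ {v})
    rw [finrank_span_singleton hv0] at this
    omega
  have hlt : P < P ⊔ span ℝ {v} := by
    refine lt_of_le_of_ne le_sup_left fun h => hv ?_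
    rw [h]
    exact SetLike.le_def.mp le_sup_right (mem_span_singleton_self v)
  have := Submodule.finrank_lt_finrank_of_lt hlt
  omega

/-- If an alternating form `ω` vanishes on `P × P` then `2 dim P ≤ dim E + dim ker ω`. -/
lemma aux_isotropic_dim_le {ω : LinearMap.BilinForm ℝ E} (halt : ω.IsAlt) {P : Submodule ℝ E}
    (hiso : ∀ x ∈ P, ∀ y ∈ P, ω x y = 0) :
    2 * finrank ℝ P ≤ finrank ℝ E + finrank ℝ (LinearMap.ker ω) := by
  set K := LinearMap.ker ω with hK
  set h : P →ₗ[ℝ] Module.Dual ℝ E := ω ∘ₗ P.subtype with hh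
  have hker : LinearMap.ker h = K.comap P.subtype := by
    ext x
    simp [hh, hK, LinearMap.mem_ker]
  have hkerrank : finrank ℝ (LinearMap.ker h) = finrank ℝ (P ⊓ K : Submodule ℝ E) := by
    rw [hker]
    have : K.comap P.subtype = (P ⊓ K).comap P.subtype := by
      ext x; simp [x.2]
    rw [this]
    exact (Submodule.comapSubtypeEquivOfLe inf_le_left).finrank_eq
  have hrange : LinearMap.range h ≤ (P ⊔ K).dualAnnihilator := by
    rintro φ ⟨x, rfl⟩
    rw [Submodule.mem_dualAnnihilator]
    intro w hw
    obtain ⟨p, hp, u, hu, rfl⟩ := Submodule.mem_sup.mp hw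
    have h1 : ω x p = 0 := hiso x x.2 p hp
    have h2 : ω x u = 0 := by
      rw [← LinearMap.IsAlt.neg halt u ↑x, LinearMap.mem_ker.mp hu]
      simp
    simp [hh, h1, h2]
  have hrank : finrank ℝ (LinearMap.range h) + finrank ℝ (P ⊔ K : Submodule ℝ E)
      ≤ finrank ℝ E := by
    have := aux_finrank_dualAnnihilator_add (P ⊔ K)
    have h2 := Submodule.finrank_mono hrange
    omega
  have hrn : finrank ℝ (LinearMap.range h) + finrank ℝ (LinearMap.ker h) = finrank ℝ P :=
    LinearMap.finrank_range_add_finrank_ker h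
  have hsupinf := Submodule.finrank_sup_add_finrank_inf_eq P K
  have hinfle : finrank ℝ (P ⊓ K : Submodule ℝ E) ≤ finrank ℝ K :=
    Submodule.finrank_mono inf_le_right
  omega

/-- Lower bound on the dimension of the `ω`-perp of `P`. -/
lemma aux_perp_dim_ge {ω : LinearMap.BilinForm ℝ E} (halt : ω.IsAlt) (P : Submodule ℝ E) :
    finrank ℝ E + finrank ℝ (P ⊓ LinearMap.ker ω : Submodule ℝ E) ≤
      finrank ℝ P + finrank ℝ (LinearMap.ker (P.subtype.dualMap ∘ₗ ω)) := by
  set K := LinearMap.ker ω with hK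
  set g : E →ₗ[ℝ] Module.Dual ℝ P := P.subtype.dualMap ∘ₗ ω with hg
  set Q : Submodule ℝ P := (P ⊓ K).comap P.subtype with hQ
  have hQrank : finrank ℝ Q = finrank ℝ (P ⊓ K : Submodule ℝ E) :=
    (Submodule.comapSubtypeEquivOfLe inf_le_left).finrank_eq
  have hrange : LinearMap.range g ≤ Q.dualAnnihilator := by
    rintro φ ⟨v, rfl⟩
    rw [Submodule.mem_dualAnnihilator]
    rintro ⟨w, hwP⟩ hw
    have hwK : w ∈ K := (Submodule.mem_comap.mp hw).2
    have : g v ⟨w, hwP⟩ = ω v w := rfl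
    rw [this, ← LinearMap.IsAlt.neg halt w v, LinearMap.mem_ker.mp hwK]
    simp
  have h1 : finrank ℝ (LinearMap.range g) + finrank ℝ Q ≤ finrank ℝ P := by
    have := aux_finrank_dualAnnihilator_add Q
    have h2 := Submodule.finrank_mono hrange
    have h3 : finrank ℝ (Module.Dual ℝ P) = finrank ℝ P := Subspace.dual_finrank_eq
    omega
  have hrn := LinearMap.finrank_range_add_finrank_ker g
  omega

/-- Extension of an isotropic subspace containing the kernel. -/
lemma aux_isotropic_extend {ω : LinearMap.BilinForm ℝ E} (halt : ω.IsAlt) {P : Submodule ℝ E}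
    (hiso : ∀ x ∈ P, ∀ y ∈ P, ω x y = 0) (hKP : LinearMap.ker ω ≤ P)
    (hdim : 2 * finrank ℝ P < finrank ℝ E + finrank ℝ (LinearMap.ker ω)) :
    ∃ P' : Submodule ℝ E, P ≤ P' ∧ finrank ℝ P' = finrank ℝ P + 1 ∧
      ∀ x ∈ P', ∀ y ∈ P', ω x y = 0 := by
  have hinf : P ⊓ LinearMap.ker ω = LinearMap.ker ω := inf_eq_right.mpr hKP
  have hperp := aux_perp_dim_ge halt P
  rw [hinf] at hperp
  set W := LinearMap.ker (P.subtype.dualMap ∘ₗ ω) with hW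
  have hlt : finrank ℝ P < finrank ℝ W := by omega
  have hns : ¬ (W ≤ P) := fun h => absurd (Submodule.finrank_mono h) (by omega)
  obtain ⟨v, hvW, hvP⟩ := SetLike.not_le_iff_exists.mp hns
  have hvperp : ∀ p ∈ P, ω v p = 0 := by
    intro p hp
    have := LinearMap.mem_ker.mp hvW
    have h2 := congrFun (congrArg DFunLike.coe this) ⟨p, hp⟩
    simpa using h2
  refine ⟨P ⊔ span ℝ {v}, le_sup_left, aux_finrank_sup_span_singleton hvP, ?_⟩
  intro x hx y hy
  obtain ⟨p, hp, z, hz, rfl⟩ := Submodule.mem_sup.mp hx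
  obtain ⟨q, hq, z', hz', rfl⟩ := Submodule.mem_sup.mp hy
  obtain ⟨a, rfl⟩ := Submodule.mem_span_singleton.mp hz
  obtain ⟨b, rfl⟩ := Submodule.mem_span_singleton.mp hz'
  have hpv : ω p v = 0 := by rw [← LinearMap.IsAlt.neg halt v p, hvperp p hp]; simp
  have hqv : ω v q = 0 := hvperp q hq
  simp [LinearMap.map_add, LinearMap.map_smul, hiso p hp q hq, hpv, hqv, halt v]

/-- Existence of isotropic subspaces of every admissible dimension. -/
lemma aux_exists_isotropic (ω : LinearMap.BilinForm ℝ E) (halt : ω.IsAlt) (j : ℕ)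
    (hj : 2 * j ≤ finrank ℝ E + finrank ℝ (LinearMap.ker ω)) (hj2 : j ≤ finrank ℝ E) :
    ∃ P : Submodule ℝ E, finrank ℝ P = j ∧ (∀ x ∈ P, ∀ y ∈ P, ω x y = 0) ∧
      (P ≤ LinearMap.ker ω ∨ LinearMap.ker ω ≤ P) := by
  induction j with
  | zero =>
    refine ⟨⊥, finrank_bot ℝ E, ?_, Or.inl bot_le⟩
    intro x hx
    rw [(Submodule.mem_bot ℝ).mp hx]
    simp
  | succ j ih =>
    obtain ⟨P, hdim, hiso, hor⟩ := ih (by omega) (by omega)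
    have main : LinearMap.ker ω ≤ P →
        ∃ P : Submodule ℝ E, finrank ℝ P = j + 1 ∧ (∀ x ∈ P, ∀ y ∈ P, ω x y = 0) ∧
          (P ≤ LinearMap.ker ω ∨ LinearMap.ker ω ≤ P) := by
      intro hKP
      have hKle : finrank ℝ (LinearMap.ker ω) ≤ j := hdim ▸ Submodule.finrank_mono hKP
      obtain ⟨P', hPP', hdim', hiso'⟩ := aux_isotropic_extend halt hiso hKP (by omega)
      exact ⟨P', by omega, hiso', Or.inr (hKP.trans hPP')⟩
    rcases hor with hPK | hKP
    · by_cases hlt : finrank ℝ P < finrank ℝ (LinearMap.ker ω)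
      · obtain ⟨v, hvK, hvP⟩ := SetLike.exists_of_lt (lt_of_le_of_ne hPK (by
          rintro rfl; exact lt_irrefl _ hlt))
        refine ⟨P ⊔ span ℝ {v}, by rw [aux_finrank_sup_span_singleton hvP, hdim], ?_, Or.inl ?_⟩
        · intro x hx y hy
          have hxK : x ∈ LinearMap.ker ω := by
            refine (sup_le hPK ?_ : P ⊔ span ℝ {v} ≤ LinearMap.ker ω) hx
            rwa [span_le, Set.singleton_subset_iff]
          rw [LinearMap.mem_ker.mp hxK]
          simp
        · exact sup_le hPK (by rwa [span_le, Set.singleton_subset_iff])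
      · have hPK' : P = LinearMap.ker ω := Submodule.eq_of_le_of_finrank_le hPK (by omega)
        exact main hPK'.ge
    · exact main hKP

end BilinAux

/-- The submodule of a Lie algebra spanned by brackets of elements of two submodules. -/
def bracketSpan {L : Type*} [LieRing L] [LieAlgebra ℝ L] (A B : Submodule ℝ L) :
    Submodule ℝ L :=
  Submodule.span ℝ {z | ∃ x ∈ A, ∃ y ∈ B, ⁅x, y⁆ = z}

/-- The commutator submodule `[𝔤, 𝔤]` of a Lie algebra. -/
def commutatorSubmodule (L : Type*) [LieRing L] [LieAlgebra ℝ L] : Submodule ℝ L :=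
  bracketSpan (⊤ : Submodule ℝ L) ⊤

/-- A family `V` of submodules of a real Lie algebra `L` is a stratification of step `s` if
`L = V 1 ⊕ ⋯ ⊕ V s`, `[V 1, V (i-1)] = V i` for `2 ≤ i ≤ s`, `V s ≠ 0` and `[V 1, V s] = 0`.
We also require `V i = 0` for `i = 0` and `i > s`. -/
structure IsStratification (L : Type*) [LieRing L] [LieAlgebra ℝ L]
    (V : ℕ → Submodule ℝ L) (s : ℕ) : Prop where
  one_le_step : 1 ≤ s
  isInternal : DirectSum.IsInternal (fun i : Fin s => V (i.1 + 1))
  bracket_eq : ∀ i, 2 ≤ i → i ≤ s → bracketSpan (V 1) (V (i - 1)) = V i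
  last_ne_bot : V s ≠ ⊥
  bracket_last_eq_bot : bracketSpan (V 1) (V s) = ⊥
  zero_eq_bot : V 0 = ⊥
  eq_bot_of_gt : ∀ i, s < i → V i = ⊥

/-- A stratified real Lie algebra with strata `V` and rank `m = dim (V 1)` is hypergenerated of
order `k` if every subspace `P ⊆ V 1` with `dim P = m - k` satisfies `[𝔤,𝔤] ⊆ Lie(P)`. -/
def IsHypergenerated (L : Type*) [LieRing L] [LieAlgebra ℝ L]
    (V : ℕ → Submodule ℝ L) (k : ℕ) : Prop :=
  ∀ P : Submodule ℝ L, P ≤ V 1 →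
    Module.finrank ℝ P = Module.finrank ℝ (V 1) - k →
    commutatorSubmodule L ≤ (LieSubalgebra.lieSpan ℝ L (P : Set L)).toSubmodule

/-- The Lie bracket as a bilinear map `V₁ → V₁ → V₂`, given that brackets of elements
of `V₁` lie in `V₂`. -/
noncomputable def bracketBilin {L : Type*} [LieRing L] [LieAlgebra ℝ L]
    (V₁ V₂ : Submodule ℝ L) (h : ∀ v ∈ V₁, ∀ w ∈ V₁, ⁅v, w⁆ ∈ V₂) :
    V₁ →ₗ[ℝ] V₁ →ₗ[ℝ] V₂ :=
  LinearMap.mk₂ ℝ (fun v w => ⟨⁅(v : L), (w : L)⁆, h v v.2 w w.2⟩)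
    (fun x y z => Subtype.ext (by simp [add_lie]))
    (fun c x y => Subtype.ext (by simp))
    (fun x y z => Subtype.ext (by simp [lie_add]))
    (fun c x y => Subtype.ext (by simp))

/-- The Kaplan operator: to a functional `μ` on `V₂` it associates the alternating
bilinear form `(v, w) ↦ μ ⁅v, w⁆` on `V₁`. -/
noncomputable def kaplan {L : Type*} [LieRing L] [LieAlgebra ℝ L]
    (V₁ V₂ : Submodule ℝ L) (h : ∀ v ∈ V₁, ∀ w ∈ V₁, ⁅v, w⁆ ∈ V₂)
    (μ : Module.Dual ℝ V₂) : LinearMap.BilinForm ℝ V₁ :=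
  (bracketBilin V₁ V₂ h).compr₂ μ

/-- The rank of a bilinear form: `dim V - dim ker ω`. -/
noncomputable def formRank {V : Type*} [AddCommGroup V] [Module ℝ V]
    (ω : LinearMap.BilinForm ℝ V) : ℕ :=
  Module.finrank ℝ V - Module.finrank ℝ (LinearMap.ker ω)

/-- The Métivier order of a step-2 stratified Lie algebra: the minimum of the ranks of the
Kaplan forms `J_μ` over nonzero functionals `μ` on `V₂`. -/
noncomputable def metivierOrder {L : Type*} [LieRing L] [LieAlgebra ℝ L]
    (V₁ V₂ : Submodule ℝ L) (h : ∀ v ∈ V₁, ∀ w ∈ V₁, ⁅v, w⁆ ∈ V₂) : ℕ :=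
  sInf {r : ℕ | ∃ μ : Module.Dual ℝ V₂, μ ≠ 0 ∧ r = formRank (kaplan V₁ V₂ h μ)}

theorem IsStratification.lie_mem_sq {L : Type*} [LieRing L] [LieAlgebra ℝ L]
    {V : ℕ → Submodule ℝ L} {s : ℕ} (hst : IsStratification L V s) (hs : 2 ≤ s) :
    ∀ v ∈ V 1, ∀ w ∈ V 1, ⁅v, w⁆ ∈ V 2 := by
  intro v hv w hw
  have h2 : bracketSpan (V 1) (V 1) = V 2 := hst.bracket_eq 2 le_rfl hs
  rw [← h2]
  exact Submodule.subset_span ⟨v, hv, w, hw, rfl⟩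

/-! ### Structural lemmas for step-2 stratifications -/

section StratAux

variable {L : Type*} [LieRing L] [LieAlgebra ℝ L] {V : ℕ → Submodule ℝ L}

lemma strat_sup (hst : IsStratification L V 2) : V 1 ⊔ V 2 = ⊤ := by
  have h := hst.isInternal.submodule_iSup_eq_top
  refine le_antisymm le_top ?_
  rw [← h]
  apply iSup_le
  intro i
  fin_cases i
  · exact le_sup_left
  · exact le_sup_right

lemma strat_inf (hst : IsStratification L V 2) : V 1 ⊓ V 2 = ⊥ := by
  have h := hst.isInternal.submodule_iSupIndep
  have := h.pairwiseDisjoint (show (0 : Fin 2) ≠ 1 by decide)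
  exact disjoint_iff.mp this

lemma strat_central (hst : IsStratification L V 2) : ∀ u ∈ V 2, ∀ z : L, ⁅u, z⁆ = 0 := by
  have h12 : ∀ x ∈ V 1, ∀ u ∈ V 2, ⁅x, u⁆ = 0 := by
    intro x hx u hu
    have : ⁅x, u⁆ ∈ bracketSpan (V 1) (V 2) := Submodule.subset_span ⟨x, hx, u, hu, rfl⟩
    rw [hst.bracket_last_eq_bot] at this
    exact (Submodule.mem_bot ℝ).mp this
  have h21 : ∀ u ∈ V 2, ∀ x ∈ V 1, ⁅u, x⁆ = 0 := by
    intro u hu x hx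
    rw [← lie_skew, h12 x hx u hu, neg_zero]
  have h22 : ∀ u ∈ V 2, ∀ w ∈ V 2, ⁅u, w⁆ = 0 := by
    intro u hu w hw
    have hV2 : V 2 = bracketSpan (V 1) (V 1) := (hst.bracket_eq 2 le_rfl le_rfl).symm
    rw [hV2] at hw
    induction hw using Submodule.span_induction with
    | mem z hz =>
      obtain ⟨x, hx, y, hy, rfl⟩ := hz
      rw [leibniz_lie, h21 u hu x hx, h21 u hu y hy, zero_lie, lie_zero, add_zero]
    | zero => exact lie_zero u
    | add a b _ _ ha hb => rw [lie_add, ha, hb, add_zero]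
    | smul c a _ ha => rw [lie_smul, ha, smul_zero]
  intro u hu z
  have hz : z ∈ V 1 ⊔ V 2 := by rw [strat_sup hst]; exact Submodule.mem_top
  obtain ⟨x, hx, w, hw, rfl⟩ := Submodule.mem_sup.mp hz
  rw [lie_add, h21 u hu x hx, h22 u hu w hw, add_zero]

lemma strat_bracketSpan_le (hst : IsStratification L V 2) {P Q : Submodule ℝ L}
    (hP : P ≤ V 1) (hQ : Q ≤ V 1) : bracketSpan P Q ≤ V 2 := by
  rw [bracketSpan, Submodule.span_le]
  rintro z ⟨x, hx, y, hy, rfl⟩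
  exact hst.lie_mem_sq le_rfl x (hP hx) y (hQ hy)

lemma strat_commutator_eq (hst : IsStratification L V 2) : commutatorSubmodule L = V 2 := by
  refine le_antisymm ?_ ?_
  · rw [commutatorSubmodule, bracketSpan, Submodule.span_le]
    rintro z ⟨x, -, y, -, rfl⟩
    have hx : x ∈ V 1 ⊔ V 2 := by rw [strat_sup hst]; exact Submodule.mem_top
    have hy : y ∈ V 1 ⊔ V 2 := by rw [strat_sup hst]; exact Submodule.mem_top
    obtain ⟨a, ha, u, hu, rfl⟩ := Submodule.mem_sup.mp hx
    obtain ⟨b, hb, w, hw, rfl⟩ := Submodule.mem_sup.mp hy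
    have h1 : ⁅u, b + w⁆ = 0 := strat_central hst u hu _
    have h2 : ⁅a, w⁆ = 0 := by
      rw [← lie_skew, strat_central hst w hw a, neg_zero]
    have : ⁅a + u, b + w⁆ = ⁅a, b⁆ := by
      rw [add_lie, h1, add_zero, lie_add, h2, add_zero]
    rw [this]
    exact hst.lie_mem_sq le_rfl a ha b hb
  · rw [← hst.bracket_eq 2 le_rfl le_rfl]
    apply Submodule.span_mono
    rintro z ⟨x, hx, y, hy, rfl⟩
    exact ⟨x, Submodule.mem_top, y, Submodule.mem_top, rfl⟩

lemma strat_lieSpan_eq (hst : IsStratification L V 2) {P : Submodule ℝ L} (hP : P ≤ V 1) :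
    (LieSubalgebra.lieSpan ℝ L (P : Set L)).toSubmodule = P ⊔ bracketSpan P P := by
  refine le_antisymm ?_ ?_
  · let K : LieSubalgebra ℝ L :=
      { toSubmodule := P ⊔ bracketSpan P P
        lie_mem' := by
          intro x y hx hy
          have hWle : bracketSpan P P ≤ V 2 := strat_bracketSpan_le hst hP hP
          obtain ⟨p, hp, b, hb, rfl⟩ := Submodule.mem_sup.mp hx
          obtain ⟨q, hq, c, hc, rfl⟩ := Submodule.mem_sup.mp hy
          have h1 : ⁅b, q + c⁆ = 0 := strat_central hst b (hWle hb) _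
          have h2 : ⁅p, c⁆ = 0 := by
            rw [← lie_skew, strat_central hst c (hWle hc) p, neg_zero]
          have h3 : ⁅p + b, q + c⁆ = ⁅p, q⁆ := by
            rw [add_lie, h1, add_zero, lie_add, h2, add_zero]
          rw [h3]
          exact Submodule.mem_sup_right (Submodule.subset_span ⟨p, hp, q, hq, rfl⟩) }
    have : LieSubalgebra.lieSpan ℝ L (P : Set L) ≤ K := by
      apply LieSubalgebra.lieSpan_le.mpr
      intro x hx
      exact Submodule.mem_sup_left hx
    exact this
  · refine sup_le ?_ ?_
    · intro x hx
      exact LieSubalgebra.subset_lieSpan hx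
    · rw [bracketSpan, Submodule.span_le]
      rintro z ⟨x, hx, y, hy, rfl⟩
      exact LieSubalgebra.lie_mem _ (LieSubalgebra.subset_lieSpan hx)
        (LieSubalgebra.subset_lieSpan hy)

lemma strat_V2_le (hst : IsStratification L V 2) {P W : Submodule ℝ L} (hP : P ≤ V 1)
    (hW : W ≤ V 2) (h : V 2 ≤ P ⊔ W) : V 2 ≤ W := by
  intro x hx
  obtain ⟨p, hp, w, hw, hx'⟩ := Submodule.mem_sup.mp (h hx)
  have hpV2 : p ∈ V 2 := by
    have : p = x - w := by rw [← hx']; abel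
    rw [this]
    exact Submodule.sub_mem _ hx (hW hw)
  have : p ∈ V 1 ⊓ V 2 := ⟨hP hp, hpV2⟩
  rw [strat_inf hst] at this
  rw [(Submodule.mem_bot ℝ).mp this, zero_add] at hx'
  rwa [← hx']

end StratAux

/-- A stratified real Lie algebra `𝔤 = V₁ ⊕ V₂` of step 2 is hypergenerated
of order `k` if and only if `2k < order(𝔤)`, the Métivier order of `𝔤`. -/
theorem isHypergenerated_iff_lt_metivierOrder {L : Type*} [LieRing L] [LieAlgebra ℝ L]
    [FiniteDimensional ℝ L] (V : ℕ → Submodule ℝ L) (hst : IsStratification L V 2) (k : ℕ) :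
    IsHypergenerated L V k ↔ 2 * k < metivierOrder (V 1) (V 2) (hst.lie_mem_sq le_rfl) := by
  classical
  set hbr := hst.lie_mem_sq le_rfl with hbrdef
  set m := Module.finrank ℝ (V 1) with hm
  have halt : ∀ μ : Module.Dual ℝ (V 2), (kaplan (V 1) (V 2) hbr μ).IsAlt := by
    intro μ x
    have h0 : (⟨⁅(x : L), (x : L)⁆, hbr x x.2 x x.2⟩ : V 2) = 0 := by
      ext; simp
    simp only [kaplan, bracketBilin, LinearMap.compr₂_apply, LinearMap.mk₂_apply]
    rw [h0, map_zero]
  have hkap : ∀ (μ : Module.Dual ℝ (V 2)) (x y : V 1),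
      kaplan (V 1) (V 2) hbr μ x y = μ ⟨⁅(x : L), (y : L)⁆, hbr x x.2 y y.2⟩ := fun μ x y => rfl
  set S : Set ℕ :=
    {r : ℕ | ∃ μ : Module.Dual ℝ (V 2), μ ≠ 0 ∧ r = formRank (kaplan (V 1) (V 2) hbr μ)}
    with hS
  have hmet : metivierOrder (V 1) (V 2) hbr = sInf S := rfl
  have hSne : S.Nonempty := by
    haveI h2 : Nontrivial (V 2) := Submodule.nontrivial_iff_ne_bot.mpr hst.last_ne_bot
    obtain ⟨μ, hμ, -⟩ := Submodule.exists_le_ker_of_lt_top (⊥ : Submodule ℝ (V 2)) bot_lt_top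
    exact ⟨_, μ, hμ, rfl⟩
  have hform : ∀ μ : Module.Dual ℝ (V 2), formRank (kaplan (V 1) (V 2) hbr μ) =
      m - Module.finrank ℝ (LinearMap.ker (kaplan (V 1) (V 2) hbr μ)) := fun μ => rfl
  constructor
  · intro hyp
    have key : ∀ μ : Module.Dual ℝ (V 2), μ ≠ 0 →
        2 * k < formRank (kaplan (V 1) (V 2) hbr μ) := by
      intro μ hμ
      by_contra hle
      push_neg at hle
      have hker_le : Module.finrank ℝ (LinearMap.ker (kaplan (V 1) (V 2) hbr μ)) ≤ m :=
        Submodule.finrank_le _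
      obtain ⟨Q, hQdim, hQiso, -⟩ := aux_exists_isotropic (kaplan (V 1) (V 2) hbr μ) (halt μ)
        (m - k) (by rw [hform μ] at hle; omega) (Nat.sub_le m k)
      set P := Q.map (V 1).subtype with hPdef
      have hPle : P ≤ V 1 := Submodule.map_subtype_le _ _
      have hPdim : Module.finrank ℝ P = m - k := by
        rw [hPdef, Submodule.finrank_map_subtype_eq]; exact hQdim
      have hcom := hyp P hPle hPdim
      rw [strat_commutator_eq hst, strat_lieSpan_eq hst hPle] at hcom
      have hV2le : V 2 ≤ bracketSpan P P :=
        strat_V2_le hst hPle (strat_bracketSpan_le hst hPle hPle) hcom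
      have hbs : bracketSpan P P ≤ (LinearMap.ker μ).map (V 2).subtype := by
        rw [bracketSpan, Submodule.span_le]
        rintro z ⟨x, hx, y, hy, rfl⟩
        rcases Submodule.mem_map.mp hx with ⟨x', hx', rfl⟩
        rcases Submodule.mem_map.mp hy with ⟨y', hy', rfl⟩
        refine ⟨⟨⁅((x' : L)), ((y' : L))⁆, hbr _ x'.2 _ y'.2⟩, ?_, rfl⟩
        have := hQiso x' hx' y' hy'
        rw [hkap] at this
        exact LinearMap.mem_ker.mpr this
      have hμ0 : μ = 0 := by
        ext x
        have hx2 := hbs (hV2le x.2)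
        obtain ⟨y, hy, hyx⟩ := Submodule.mem_map.mp hx2
        have hyx' : y = x := Subtype.ext hyx
        rw [← hyx']
        exact LinearMap.mem_ker.mp hy
      exact hμ hμ0
    obtain ⟨μ0, hμ0, hr0⟩ := Nat.sInf_mem hSne
    rw [hmet, hr0]
    exact key μ0 hμ0
  · intro hlt P hP hPdim
    rw [strat_commutator_eq hst, strat_lieSpan_eq hst hP]
    refine le_trans ?_ le_sup_right
    by_contra hne
    have hQlt : (bracketSpan P P).comap (V 2).subtype < ⊤ := by
      rw [lt_top_iff_ne_top]
      intro htop
      apply hne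
      intro x hx
      have : (⟨x, hx⟩ : V 2) ∈ (bracketSpan P P).comap (V 2).subtype := htop ▸ Submodule.mem_top
      exact this
    obtain ⟨μ, hμ, hker⟩ := Submodule.exists_le_ker_of_lt_top _ hQlt
    have hiso : ∀ x ∈ P.comap (V 1).subtype, ∀ y ∈ P.comap (V 1).subtype,
        kaplan (V 1) (V 2) hbr μ x y = 0 := by
      intro x hx y hy
      rw [hkap]
      have hmem : (⟨⁅(x : L), (y : L)⁆, hbr _ x.2 _ y.2⟩ : V 2) ∈
          (bracketSpan P P).comap (V 2).subtype := by
        exact Submodule.subset_span ⟨(x : L), hx, (y : L), hy, rfl⟩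
      exact LinearMap.mem_ker.mp (hker hmem)
    have hbound := aux_isotropic_dim_le (halt μ) hiso
    have hfr : Module.finrank ℝ (P.comap (V 1).subtype) = Module.finrank ℝ P :=
      (Submodule.comapSubtypeEquivOfLe hP).finrank_eq
    have hle2 : sInf S ≤ formRank (kaplan (V 1) (V 2) hbr μ) :=
      Nat.sInf_le ⟨μ, hμ, rfl⟩
    rw [hmet] at hlt
    rw [hform μ] at hle2
    rw [hfr, hPdim] at hbound
    omega
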